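/- arXiv:1510.03737 — 4 statements merged into one kernel-verified Lean document; each statement's English description precedes it below -/
import Mathlib

section
/- For any nonzero p, q ∈ ℂ^{n+1}, arccos(|p·q̄|/(|p|·|q|)) = arcsin(| p/|p| − ((p·q̄)/(|p|·|q|²))·q |). In particular the two standard expressions for the Fubini–Study distance between the projective points [p] and [q] agree. -/
noncomputable section

/-- Hermitian product `w·z̄ = Σᵢ wⁱ·conj(zⁱ)` on `ℂ^m`. -/
def herm {m : ℕ} (w z : EuclideanSpace ℂ (Fin m)) : ℂ :=
  ∑ i, w i * (starRingEnd ℂ) (z i)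

/-- Fubini–Study distance between (the projective classes of) `p` and `q`. -/
def fsDist {m : ℕ} (p q : EuclideanSpace ℂ (Fin m)) : ℝ :=
  Real.arccos (‖herm p q‖ / (‖p‖ * ‖q‖))

/-- Initial velocity `γ₀'(p,q)` of the geodesic from `[p]` to `[q]`. -/
def gammaDir {m : ℕ} (p q : EuclideanSpace ℂ (Fin m)) : EuclideanSpace ℂ (Fin m) :=
  (Real.cot (fsDist p q) : ℂ) • (((‖p‖ : ℂ) / herm q p) • q - (‖p‖ : ℂ)⁻¹ • p)

/-- The geodesic `γ_t(p,q) = cos t·(p/|p|) + sin t·γ₀'(p,q)`. -/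
def geo {m : ℕ} (t : ℝ) (p q : EuclideanSpace ℂ (Fin m)) : EuclideanSpace ℂ (Fin m) :=
  (Real.cos t : ℂ) • ((‖p‖ : ℂ)⁻¹ • p) + (Real.sin t : ℂ) • gammaDir p q

/-- The velocity `γ_t'(p,q) = −sin t·(p/|p|) + cos t·γ₀'(p,q)`. -/
def geoVel {m : ℕ} (t : ℝ) (p q : EuclideanSpace ℂ (Fin m)) : EuclideanSpace ℂ (Fin m) :=
  (-(Real.sin t) : ℂ) • ((‖p‖ : ℂ)⁻¹ • p) + (Real.cos t : ℂ) • gammaDir p q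

lemma herm_eq_inner {m : ℕ} (w z : EuclideanSpace ℂ (Fin m)) :
    herm w z = inner ℂ z w := by
  simp [herm, PiLp.inner_apply, mul_comm]

theorem stmt0 {n : ℕ} (p q : EuclideanSpace ℂ (Fin (n + 1))) (hp : p ≠ 0) (hq : q ≠ 0) :
    Real.arccos (‖herm p q‖ / (‖p‖ * ‖q‖)) =
      Real.arcsin ‖(‖p‖ : ℂ)⁻¹ • p - (herm p q / ((‖p‖ : ℂ) * (‖q‖ : ℂ) ^ 2)) • q‖ := by
  have hpn : (0:ℝ) < ‖p‖ := norm_pos_iff.mpr hp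
  have hqn : (0:ℝ) < ‖q‖ := norm_pos_iff.mpr hq
  set a : ℂ := herm p q with ha
  set c : ℝ := ‖a‖ / (‖p‖ * ‖q‖) with hc
  have hc0 : 0 ≤ c := by positivity
  have hCS : ‖a‖ ≤ ‖p‖ * ‖q‖ := by
    have := norm_inner_le_norm (𝕜 := ℂ) q p
    rw [← herm_eq_inner] at this
    simpa [mul_comm] using this
  have hc1 : c ≤ 1 := by
    rw [hc, div_le_one (by positivity)]; exact hCS
  have key : ‖(‖p‖ : ℂ)⁻¹ • p - (a / ((‖p‖ : ℂ) * (‖q‖ : ℂ) ^ 2)) • q‖ ^ 2 = 1 - c ^ 2 := by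
    rw [norm_sub_sq (𝕜 := ℂ)]
    have h1 : ‖(‖p‖ : ℂ)⁻¹ • p‖ ^ 2 = 1 := by
      rw [norm_smul]
      simp [hpn.ne']
    have h2 : ‖(a / ((‖p‖ : ℂ) * (‖q‖ : ℂ) ^ 2)) • q‖ ^ 2 = c ^ 2 := by
      rw [norm_smul, mul_pow]
      simp only [norm_div, norm_mul, norm_pow, Complex.norm_real,
        Real.norm_eq_abs, abs_of_pos hpn, abs_of_pos hqn]
      rw [hc]
      field_simp
    have h3 : (inner ℂ ((‖p‖ : ℂ)⁻¹ • p) ((a / ((‖p‖ : ℂ) * (‖q‖ : ℂ) ^ 2)) • q) : ℂ).re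
        = c ^ 2 := by
      rw [inner_smul_left, inner_smul_right]
      have hip : (inner ℂ p q : ℂ) = (starRingEnd ℂ) a := by
        rw [ha, herm_eq_inner, inner_conj_symm]
      rw [hip]
      have e : (starRingEnd ℂ) ((‖p‖ : ℂ)⁻¹) * (a / ((‖p‖ : ℂ) * (‖q‖ : ℂ) ^ 2) *
          (starRingEnd ℂ) a) = ((‖a‖ ^ 2 / (‖p‖ ^ 2 * ‖q‖ ^ 2) : ℝ) : ℂ) := by
        rw [map_inv₀, Complex.conj_ofReal,
          show a / ((‖p‖ : ℂ) * (‖q‖ : ℂ) ^ 2) * (starRingEnd ℂ) a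
            = a * (starRingEnd ℂ) a * ((‖p‖ : ℂ) * (‖q‖ : ℂ) ^ 2)⁻¹ from by ring,
          Complex.mul_conj, ← Complex.sq_norm]
        push_cast
        field_simp
      rw [e, Complex.ofReal_re, hc, div_pow, mul_pow]
    rw [h1, h2]
    rw [RCLike.re_to_complex, h3]; ring
  have hnorm : ‖(‖p‖ : ℂ)⁻¹ • p - (a / ((‖p‖ : ℂ) * (‖q‖ : ℂ) ^ 2)) • q‖
      = Real.sqrt (1 - c ^ 2) := by
    rw [← key, Real.sqrt_sq (norm_nonneg _)]
  rw [hnorm, ← Real.arccos_eq_arcsin hc0]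
end
end

section
/- Let p, q ∈ ℂ^{n+1} be nonzero with 0 < d(p,q) < π/2, and let z ∈ ℂ^{n+1} be nonzero. Then (|z·ᾱ| + |z·β̄|)/(√2·|z|) ∈ [0,1] and the distance from z to the geodesic through p and q satisfies inf_{t ∈ ℝ} d(z, γ_t(p,q)) = arccos( (|z·ᾱ| + |z·β̄|)/(√2·|z|) ). -/
noncomputable section

/-- `α = (p/|p| + i·γ₀'(p,q))/√2`. -/
def alphaV {m : ℕ} (p q : EuclideanSpace ℂ (Fin m)) : EuclideanSpace ℂ (Fin m) :=
  ((Real.sqrt 2 : ℂ))⁻¹ • ((‖p‖ : ℂ)⁻¹ • p + Complex.I • gammaDir p q)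

/-- `β = (p/|p| − i·γ₀'(p,q))/√2`. -/
def betaV {m : ℕ} (p q : EuclideanSpace ℂ (Fin m)) : EuclideanSpace ℂ (Fin m) :=
  ((Real.sqrt 2 : ℂ))⁻¹ • ((‖p‖ : ℂ)⁻¹ • p - Complex.I • gammaDir p q)


local notation "⟪" x ", " y "⟫" => @inner ℂ _ _ x y

lemma herm_inner {m : ℕ} (w z : EuclideanSpace ℂ (Fin m)) : herm w z = ⟪z, w⟫ := by
  simp [herm, PiLp.inner_apply, mul_comm]

lemma norm_one_of_inner {m : ℕ} (x : EuclideanSpace ℂ (Fin m)) (hx : ⟪x, x⟫ = 1) :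
    ‖x‖ = 1 := by
  have h0 : ⟪x, x⟫ = ((‖x‖:ℝ) : ℂ)^2 := inner_self_eq_norm_sq_to_K x
  have h2 : ((‖x‖:ℝ) : ℂ)^2 = 1 := by rw [← h0, hx]
  have h3 : (‖x‖:ℝ)^2 = 1 := by exact_mod_cast h2
  have h4 : (‖x‖ - 1) * (‖x‖ + 1) = 0 := by linear_combination h3
  rcases mul_eq_zero.mp h4 with h | h
  · linarith
  · linarith [norm_nonneg x]

lemma arccos_anti {x y : ℝ} (h : x ≤ y) : Real.arccos y ≤ Real.arccos x := by
  unfold Real.arccos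
  have := Real.monotone_arcsin h
  linarith

theorem stmt9 {n : ℕ} (p q : EuclideanSpace ℂ (Fin (n + 1))) (hp : p ≠ 0) (hq : q ≠ 0)
    (hd0 : 0 < fsDist p q) (hd2 : fsDist p q < Real.pi / 2)
    (z : EuclideanSpace ℂ (Fin (n + 1))) (hz : z ≠ 0) :
    (0 ≤ (‖herm z (alphaV p q)‖ + ‖herm z (betaV p q)‖) /
        (Real.sqrt 2 * ‖z‖) ∧
      (‖herm z (alphaV p q)‖ + ‖herm z (betaV p q)‖) /
        (Real.sqrt 2 * ‖z‖) ≤ 1) ∧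
    (⨅ t : ℝ, fsDist z (geo t p q)) =
      Real.arccos ((‖herm z (alphaV p q)‖ + ‖herm z (betaV p q)‖) /
        (Real.sqrt 2 * ‖z‖)) := by
  have hpn : (0:ℝ) < ‖p‖ := norm_pos_iff.mpr hp
  have hqn : (0:ℝ) < ‖q‖ := norm_pos_iff.mpr hq
  have hzn : (0:ℝ) < ‖z‖ := norm_pos_iff.mpr hz
  have hpC : (‖p‖ : ℂ) ≠ 0 := Complex.ofReal_ne_zero.mpr hpn.ne'
  set e : ℂ := ⟪p, q⟫ with he0
  set c : ℝ := ‖herm p q‖ / (‖p‖ * ‖q‖) with hc0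
  have habs_e : ‖herm p q‖ = ‖e‖ := by
    rw [herm_inner, he0, ← inner_conj_symm]
    exact Complex.norm_conj _
  have hc1 : c ≤ 1 := by
    rw [hc0, div_le_one (by positivity)]
    have := norm_inner_le_norm (𝕜 := ℂ) q p
    rw [herm_inner]
    calc ‖⟪q, p⟫‖ ≤ ‖q‖ * ‖p‖ := this
      _ = ‖p‖ * ‖q‖ := mul_comm _ _
  have hcn0 : 0 ≤ c := by rw [hc0]; positivity
  set d : ℝ := fsDist p q with hd'
  have hdc : d = Real.arccos c := rfl
  have hcos : Real.cos d = c := by rw [hdc]; exact Real.cos_arccos (by linarith) hc1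
  have hcpos : 0 < c := by
    rw [← hcos]
    exact Real.cos_pos_of_mem_Ioo ⟨by linarith [Real.pi_pos], hd2⟩
  have hclt : c < 1 := Real.arccos_pos.mp (hdc ▸ hd0)
  set s : ℝ := Real.sin d with hs0
  have hspos : 0 < s := Real.sin_pos_of_pos_of_lt_pi hd0 (by linarith [Real.pi_pos])
  have hs2 : s^2 = 1 - c^2 := by
    have := Real.sin_sq_add_cos_sq d
    rw [hcos] at this; linarith
  have hcot : Real.cot d = c / s := by rw [Real.cot_eq_cos_div_sin, hcos]
  have habs_e' : ‖e‖ = c * (‖p‖ * ‖q‖) := by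
    rw [hc0, habs_e]; field_simp
  have he_ne : e ≠ 0 := by
    have hpos : 0 < ‖e‖ := by rw [habs_e']; positivity
    exact fun h => by simp [h] at hpos
  set u : EuclideanSpace ℂ (Fin (n+1)) := (‖p‖ : ℂ)⁻¹ • p with hu0
  set v : EuclideanSpace ℂ (Fin (n+1)) := gammaDir p q with hv0
  have hv_def : v = (Real.cot d : ℂ) • (((‖p‖ : ℂ) / e) • q - u) := by
    rw [hv0, gammaDir, herm_inner, ← he0, ← hd', ← hu0]
  have huu : ⟪u, u⟫ = 1 := by
    rw [hu0, inner_smul_left, inner_smul_right, inner_self_eq_norm_sq_to_K, map_inv₀,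
      Complex.conj_ofReal]
    field_simp
    rfl
  have huq : ⟪u, q⟫ = (‖p‖ : ℂ)⁻¹ * e := by
    rw [hu0, inner_smul_left, map_inv₀, Complex.conj_ofReal, he0]
  have hqu : ⟪q, u⟫ = (‖p‖ : ℂ)⁻¹ * (starRingEnd ℂ) e := by
    rw [hu0, inner_smul_right, ← inner_conj_symm q p, he0]
  have hqq : ⟪q, q⟫ = ((‖q‖:ℝ) : ℂ)^2 := inner_self_eq_norm_sq_to_K q
  have huv : ⟪u, v⟫ = 0 := by
    rw [hv_def, inner_smul_right, inner_sub_right, inner_smul_right, huq, huu]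
    field_simp
    ring
  have hvu : ⟪v, u⟫ = 0 := by
    rw [← inner_conj_symm, huv, map_zero]
  have hee : e * (starRingEnd ℂ) e = (c:ℂ)^2 * (‖p‖:ℂ)^2 * (‖q‖:ℂ)^2 := by
    rw [Complex.mul_conj, Complex.normSq_eq_norm_sq, habs_e']
    push_cast; ring
  have hsC : (s : ℂ) ≠ 0 := Complex.ofReal_ne_zero.mpr hspos.ne'
  have hcC : (c : ℂ) ≠ 0 := Complex.ofReal_ne_zero.mpr hcpos.ne'
  have hqC : (‖q‖ : ℂ) ≠ 0 := Complex.ofReal_ne_zero.mpr hqn.ne'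
  have hec : (starRingEnd ℂ) e ≠ 0 := by simpa using he_ne
  have hs2C : (s : ℂ)^2 = 1 - (c:ℂ)^2 := by exact_mod_cast hs2
  have hww : ⟪(((‖p‖ : ℂ) / e) • q - u : EuclideanSpace ℂ (Fin (n+1))),
      ((‖p‖ : ℂ) / e) • q - u⟫ = 1/(c:ℂ)^2 - 1 := by
    simp only [inner_smul_left, inner_smul_right, inner_sub_left, inner_sub_right, huq, hqu,
      huu, hqq, Complex.conj_ofReal, map_div₀]
    field_simp
    linear_combination (-1:ℂ) * hee
  have hvv : ⟪v, v⟫ = 1 := by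
    rw [hv_def, inner_smul_left, inner_smul_right, hww, hcot, Complex.conj_ofReal]
    push_cast
    field_simp
    linear_combination (-1:ℂ) * hs2C

  -- geodesic is unit and its inner product with z
  have hgeo : ∀ t : ℝ, geo t p q = (Real.cos t : ℂ) • u + (Real.sin t : ℂ) • v := by
    intro t
    simp only [geo, hu0, hv0]
  have hgeo_norm : ∀ t : ℝ, ‖geo t p q‖ = 1 := by
    intro t
    apply norm_one_of_inner
    rw [hgeo t]
    simp only [inner_add_left, inner_add_right, inner_smul_left, inner_smul_right, huu, huv,
      hvu, hvv, Complex.conj_ofReal]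
    have hC : (Real.sin t : ℂ)^2 + (Real.cos t : ℂ)^2 = 1 := by
      exact_mod_cast Real.sin_sq_add_cos_sq t
    linear_combination hC
  set a' : ℂ := ⟪u, z⟫ with ha'
  set b' : ℂ := ⟪v, z⟫ with hb'
  set A : ℂ := (a' - Complex.I * b') / 2 with hA0
  set B : ℂ := (a' + Complex.I * b') / 2 with hB0
  have hinner : ∀ t : ℝ, ⟪geo t p q, z⟫
      = Complex.exp ((t:ℂ) * Complex.I) * A + Complex.exp (-(t:ℂ) * Complex.I) * B := by
    intro t
    rw [hgeo t]
    simp only [inner_add_left, inner_smul_left, Complex.conj_ofReal, Complex.exp_mul_I,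
      Complex.cos_neg, Complex.sin_neg, ← Complex.ofReal_cos, ← Complex.ofReal_sin,
      hA0, hB0, ← ha', ← hb']
    linear_combination ((Real.sin t : ℂ) * b') * Complex.I_sq
  have hfs : ∀ t : ℝ, fsDist z (geo t p q) = Real.arccos (‖Complex.exp ((t:ℂ) * Complex.I) * A + Complex.exp (-(t:ℂ) * Complex.I) * B‖ / ‖z‖) := by
    intro t
    rw [fsDist, herm_inner, hinner t, hgeo_norm t, mul_one]
  set t₀ : ℝ := (Complex.arg B - Complex.arg A) / 2 with ht₀
  set φ : ℝ := (Complex.arg A + Complex.arg B) / 2 with hφ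
  have hA1 : (‖A‖ : ℂ) * Complex.exp (Complex.arg A * Complex.I) = A :=
    Complex.norm_mul_exp_arg_mul_I A
  have hB1 : (‖B‖ : ℂ) * Complex.exp (Complex.arg B * Complex.I) = B :=
    Complex.norm_mul_exp_arg_mul_I B
  have key : Complex.exp ((t₀:ℂ) * Complex.I) * A + Complex.exp (-(t₀:ℂ) * Complex.I) * B
      = ((‖A‖ + ‖B‖ : ℝ) : ℂ) * Complex.exp ((φ:ℂ) * Complex.I) := by
    conv_lhs => rw [← hA1, ← hB1]
    have e1 : (t₀ : ℂ) * Complex.I + (Complex.arg A : ℂ) * Complex.I = (φ:ℂ) * Complex.I := by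
      rw [ht₀, hφ]; push_cast; ring
    have e2 : (-(t₀:ℂ)) * Complex.I + (Complex.arg B : ℂ) * Complex.I = (φ:ℂ) * Complex.I := by
      rw [ht₀, hφ]; push_cast; ring
    rw [show Complex.exp ((t₀:ℂ) * Complex.I) * ((‖A‖ : ℂ)
          * Complex.exp (Complex.arg A * Complex.I))
        = (‖A‖ : ℂ) * Complex.exp ((t₀:ℂ) * Complex.I + (Complex.arg A : ℂ)
          * Complex.I) by rw [Complex.exp_add]; ring,
       show Complex.exp (-(t₀:ℂ) * Complex.I) * ((‖B‖ : ℂ)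
          * Complex.exp (Complex.arg B * Complex.I))
        = (‖B‖ : ℂ) * Complex.exp ((-(t₀:ℂ)) * Complex.I + (Complex.arg B : ℂ)
          * Complex.I) by rw [Complex.exp_add]; ring, e1, e2]
    push_cast
    ring
  have hFt₀ : ‖Complex.exp ((t₀:ℂ) * Complex.I) * A
      + Complex.exp (-(t₀:ℂ) * Complex.I) * B‖ = ‖A‖ + ‖B‖ := by
    rw [key, norm_mul, Complex.norm_exp_ofReal_mul_I, mul_one, Complex.norm_real,
      Real.norm_of_nonneg (by positivity)]
  have hFle : ∀ t : ℝ, ‖Complex.exp ((t:ℂ) * Complex.I) * A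
      + Complex.exp (-(t:ℂ) * Complex.I) * B‖ ≤ ‖A‖ + ‖B‖ := by
    intro t
    calc ‖Complex.exp ((t:ℂ) * Complex.I) * A + Complex.exp (-(t:ℂ) * Complex.I) * B‖
        ≤ ‖Complex.exp ((t:ℂ) * Complex.I) * A‖
          + ‖Complex.exp (-(t:ℂ) * Complex.I) * B‖ := norm_add_le _ _
      _ = ‖A‖ + ‖B‖ := by
          simp [map_mul, Complex.norm_exp]
  have hFz : ∀ t : ℝ, ‖Complex.exp ((t:ℂ) * Complex.I) * A
      + Complex.exp (-(t:ℂ) * Complex.I) * B‖ ≤ ‖z‖ := by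
    intro t
    rw [← hinner t]
    calc ‖⟪geo t p q, z⟫‖ ≤ ‖geo t p q‖ * ‖z‖ := norm_inner_le_norm _ _
      _ = ‖z‖ := by rw [hgeo_norm t, one_mul]
  have hABle : ‖A‖ + ‖B‖ ≤ ‖z‖ := hFt₀ ▸ hFz t₀
  -- alpha and beta
  have sqrt2_pos : (0:ℝ) < Real.sqrt 2 := Real.sqrt_pos.mpr (by norm_num)
  have sqrt2C : ((Real.sqrt 2 : ℝ) : ℂ) ≠ 0 := Complex.ofReal_ne_zero.mpr sqrt2_pos.ne'
  have h2C : (Real.sqrt 2 : ℂ) * (Real.sqrt 2 : ℂ) = 2 := by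
    rw [← Complex.ofReal_mul, Real.mul_self_sqrt (by norm_num)]
    norm_num
  have hzα : ‖herm z (alphaV p q)‖ = Real.sqrt 2 * ‖A‖ := by
    rw [herm_inner, show alphaV p q = ((Real.sqrt 2 : ℂ))⁻¹ • (u + Complex.I • v) from rfl,
      inner_smul_left, inner_add_left, ← ha', inner_smul_left, Complex.conj_I, map_inv₀,
      Complex.conj_ofReal, ← hb']
    rw [show ((Real.sqrt 2 : ℝ):ℂ)⁻¹ * (a' + -Complex.I * b') = (Real.sqrt 2 : ℂ) * A by
      rw [hA0]; field_simp; linear_combination (-(a' - Complex.I * b')) * h2C]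
    rw [norm_mul, Complex.norm_real, Real.norm_of_nonneg sqrt2_pos.le]
  have hzβ : ‖herm z (betaV p q)‖ = Real.sqrt 2 * ‖B‖ := by
    rw [herm_inner, show betaV p q = ((Real.sqrt 2 : ℂ))⁻¹ • (u - Complex.I • v) from rfl,
      inner_smul_left, inner_sub_left, ← ha', inner_smul_left, Complex.conj_I, map_inv₀,
      Complex.conj_ofReal, ← hb']
    rw [show ((Real.sqrt 2 : ℝ):ℂ)⁻¹ * (a' - -Complex.I * b') = (Real.sqrt 2 : ℂ) * B by
      rw [hB0]; field_simp; linear_combination (-(a' + Complex.I * b')) * h2C]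
    rw [norm_mul, Complex.norm_real, Real.norm_of_nonneg sqrt2_pos.le]
  have hM : (‖herm z (alphaV p q)‖ + ‖herm z (betaV p q)‖)
      / (Real.sqrt 2 * ‖z‖) = (‖A‖ + ‖B‖) / ‖z‖ := by
    rw [hzα, hzβ, ← mul_add, mul_div_mul_left _ _ sqrt2_pos.ne']
  have hbdd : BddBelow (Set.range fun t : ℝ => fsDist z (geo t p q)) := by
    refine ⟨0, ?_⟩
    rintro x ⟨t, rfl⟩
    show (0:ℝ) ≤ fsDist z (geo t p q)
    rw [hfs t]
    exact Real.arccos_nonneg _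
  refine ⟨⟨by rw [hM]; positivity, by rw [hM, div_le_one hzn]; exact hABle⟩, ?_⟩
  rw [hM]
  apply le_antisymm
  · have h1 := ciInf_le hbdd t₀
    rwa [hfs t₀, hFt₀] at h1
  · apply le_ciInf
    intro t
    rw [hfs t]
    apply arccos_anti
    gcongr
    exact hFle t
end
end

section
/- Let n ≥ 1 and let Ω = { z̃ ∈ ℂⁿ : |z̃| < 1 and (Re z̃ⁿ < 0 or Im z̃ⁿ < 0) }. Then for every z̃ ∈ ℂⁿ with |z̃| < √2 − 1, Re z̃ⁿ < 0 and Im z̃ⁿ < 0, the distance from z̃ to the topological frontier of Ω satisfies inf_{w̃ ∈ frontier Ω} d_c(z̃, w̃) = arcsin( |z̃ⁿ| / √(|z̃|² + 1) ), and the infimum is attained at w̃ = (z̃¹,…,z̃ⁿ⁻¹, 0). -/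
noncomputable section

/-- The Fubini–Study distance between affine-chart points `[z̃ : 1]`, `[w̃ : 1]`. -/
def chartDist {m : ℕ} (z w : EuclideanSpace ℂ (Fin m)) : ℝ :=
  Real.arccos (‖herm z w + 1‖ /
    (Real.sqrt (‖z‖ ^ 2 + 1) * Real.sqrt (‖w‖ ^ 2 + 1)))

namespace Stmt18Aux

variable {m : ℕ}

lemma norm_sq_eq (x : EuclideanSpace ℂ (Fin m)) :
    ‖x‖ ^ 2 = ∑ i, ‖x i‖ ^ 2 := by
  rw [EuclideanSpace.norm_eq, Real.sq_sqrt (by positivity)]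

lemma herm_self (x : EuclideanSpace ℂ (Fin m)) : herm x x = ((‖x‖ ^ 2 : ℝ) : ℂ) := by
  rw [norm_sq_eq]
  push_cast
  unfold herm
  congr 1
  ext i
  rw [Complex.mul_conj]
  norm_cast
  exact (Complex.sq_norm _).symm

lemma herm_abs_le (x y : EuclideanSpace ℂ (Fin m)) :
    ‖herm x y‖ ≤ ‖x‖ * ‖y‖ := by
  have : herm x y = inner ℂ y x := by
    unfold herm
    rw [PiLp.inner_apply]
    congr 1
  rw [this]
  simpa [mul_comm] using norm_inner_le_norm (𝕜 := ℂ) y x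

lemma herm_split (z w : EuclideanSpace ℂ (Fin m)) (i : Fin m) :
    herm z w = herm (WithLp.toLp 2 (Function.update z i 0)) (WithLp.toLp 2 (Function.update w i 0))
      + z i * (starRingEnd ℂ) (w i) := by
  unfold herm
  rw [← Finset.sum_erase_add _ _ (Finset.mem_univ i),
      ← Finset.sum_erase_add _ _ (Finset.mem_univ i)]
  simp only [PiLp.toLp_apply, Function.update_self, map_zero, mul_zero, add_zero]
  congr 1
  apply Finset.sum_congr rfl
  intro j hj
  rw [Function.update_of_ne (Finset.ne_of_mem_erase hj),
      Function.update_of_ne (Finset.ne_of_mem_erase hj)]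

lemma norm_update_sq (z w : EuclideanSpace ℂ (Fin m)) (i : Fin m) (c : ℂ)
    (h : ∀ j, w j = Function.update z i c j) :
    ‖w‖ ^ 2 = ‖z‖ ^ 2 - ‖z i‖ ^ 2 + ‖c‖ ^ 2 := by
  rw [norm_sq_eq w, norm_sq_eq z]
  simp only [h]
  rw [← Finset.sum_erase_add _ _ (Finset.mem_univ i),
      ← Finset.sum_erase_add _ (fun j => ‖z j‖ ^ 2) (Finset.mem_univ i)]
  have : ∀ j ∈ Finset.univ.erase i,
      ‖Function.update z i c j‖ ^ 2 = ‖z j‖ ^ 2 := by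
    intro j hj
    rw [Function.update_of_ne (Finset.ne_of_mem_erase hj)]
  rw [Finset.sum_congr rfl this, Function.update_self]
  ring

lemma dist_update (z : EuclideanSpace ℂ (Fin m)) (i : Fin m) (c₁ c₂ : ℂ)
    (w₁ w₂ : EuclideanSpace ℂ (Fin m))
    (h₁ : ∀ j, w₁ j = Function.update z i c₁ j)
    (h₂ : ∀ j, w₂ j = Function.update z i c₂ j) :
    dist w₁ w₂ = dist c₁ c₂ := by
  rw [EuclideanSpace.dist_eq]
  rw [Finset.sum_eq_single i]
  · simp only [h₁, h₂, Function.update_self]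
    exact Real.sqrt_sq dist_nonneg
  · intro j _ hj
    simp [h₁, h₂, Function.update_of_ne hj]
  · simp

lemma key_ineq (s u t A B : ℝ) (hs : 0 ≤ s) (hu : 0 ≤ u)
    (hA : 0 ≤ A) (hB2 : B ^ 2 ≤ 1 + A * t ^ 2) (hA2 : A ≤ 1 / 2)
    (hs1 : s ≤ 1) (hu1 : u ≤ 1) :
    (B + s * u) ^ 2 ≤ (s ^ 2 + 1) * (u ^ 2 + t ^ 2 + 1) := by
  have hB' : B ≤ 1 + A * t ^ 2 / 2 := by
    nlinarith [sq_nonneg (A * t ^ 2), sq_nonneg (B - 1 - A * t ^ 2 / 2)]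
  have hsu : s * u ≤ 1 := mul_le_one₀ hs1 hu hu1
  have hsu0 : 0 ≤ s * u := mul_nonneg hs hu
  have h2 : 2 * (s * u) ≤ s ^ 2 + u ^ 2 := by nlinarith [sq_nonneg (s - u)]
  have h3 : A * t ^ 2 ≤ t ^ 2 / 2 := by nlinarith [sq_nonneg t]
  have h4 : s * u * (A * t ^ 2) ≤ A * t ^ 2 := by
    nlinarith [mul_nonneg hA (sq_nonneg t)]
  have h5 : B * (s * u) ≤ (1 + A * t ^ 2 / 2) * (s * u) :=
    mul_le_mul_of_nonneg_right hB' hsu0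
  nlinarith [h2, h3, h4, h5]

lemma arccos_form (S A : ℝ) (hA : 0 ≤ A) (hAS : A ≤ S) :
    Real.arccos ((S - A + 1) / (Real.sqrt (S + 1) * Real.sqrt (S - A + 1))) =
      Real.arcsin (Real.sqrt A / Real.sqrt (S + 1)) := by
  have hS : 0 ≤ S := hA.trans hAS
  have h1 : (0:ℝ) < S + 1 := by linarith
  have h2 : (0:ℝ) < S - A + 1 := by linarith
  rw [Real.arcsin_eq_arccos (by positivity)]
  congr 1
  have hx2 : (Real.sqrt A / Real.sqrt (S + 1)) ^ 2 = A / (S + 1) := by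
    rw [div_pow, Real.sq_sqrt hA, Real.sq_sqrt h1.le]
  rw [hx2]
  have he : (1 : ℝ) - A / (S + 1) = (S - A + 1) / (S + 1) := by field_simp; ring
  rw [he, Real.sqrt_div h2.le]
  rw [div_eq_div_iff (by positivity) (by positivity)]
  have h3 : Real.sqrt (S - A + 1) * Real.sqrt (S - A + 1) = S - A + 1 :=
    Real.mul_self_sqrt h2.le
  nlinarith [h3, Real.sqrt_nonneg (S + 1), Real.sqrt_nonneg (S - A + 1)]

end Stmt18Aux

open Stmt18Aux in
set_option maxHeartbeats 1000000 in
theorem stmt18 {n : ℕ}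
    (Om : Set (EuclideanSpace ℂ (Fin (n + 1))))
    (hOm : Om = {z : EuclideanSpace ℂ (Fin (n + 1)) |
      ‖z‖ < 1 ∧ ((z (Fin.last n)).re < 0 ∨ (z (Fin.last n)).im < 0)})
    (z : EuclideanSpace ℂ (Fin (n + 1)))
    (hz : ‖z‖ < Real.sqrt 2 - 1)
    (hre : (z (Fin.last n)).re < 0) (him : (z (Fin.last n)).im < 0) :
    (⨅ w : frontier Om, chartDist z (w : EuclideanSpace ℂ (Fin (n + 1)))) =
      Real.arcsin (‖z (Fin.last n)‖ / Real.sqrt (‖z‖ ^ 2 + 1)) ∧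
    WithLp.toLp 2 (Function.update z (Fin.last n) 0) ∈ frontier Om ∧
    chartDist z (WithLp.toLp 2 (Function.update z (Fin.last n) 0)) =
      Real.arcsin (‖z (Fin.last n)‖ / Real.sqrt (‖z‖ ^ 2 + 1)) := by
  classical
  set i0 := Fin.last n with hi0
  -- numeric facts
  have hrt2 : Real.sqrt 2 ^ 2 = 2 := Real.sq_sqrt (by norm_num)
  have hrt2a : (1.25 : ℝ) ≤ Real.sqrt 2 := by
    nlinarith [Real.sqrt_nonneg 2]
  have hS32 : ‖z‖ ^ 2 < 3 - 2 * Real.sqrt 2 := by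
    nlinarith [norm_nonneg z]
  have hShalf : ‖z‖ ^ 2 < 1 / 2 := by nlinarith
  have hA0 : (0:ℝ) ≤ ‖z i0‖ ^ 2 := sq_nonneg _
  have hAS : ‖z i0‖ ^ 2 ≤ ‖z‖ ^ 2 := by
    rw [norm_sq_eq]
    exact Finset.single_le_sum (f := fun j => ‖z j‖ ^ 2)
      (fun j _ => sq_nonneg _) (Finset.mem_univ i0)
  have hS0 : (0:ℝ) ≤ ‖z‖ ^ 2 := sq_nonneg _
  -- Om is open
  have hOpen : IsOpen Om := by
    rw [hOm]
    simp only [Set.setOf_and, Set.setOf_or]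
    exact (isOpen_lt continuous_norm continuous_const).inter
      ((isOpen_lt (Complex.continuous_re.comp (EuclideanSpace.proj i0).continuous)
          continuous_const).union
        (isOpen_lt (Complex.continuous_im.comp (EuclideanSpace.proj i0).continuous)
          continuous_const))
  set w0 : EuclideanSpace ℂ (Fin (n + 1)) := WithLp.toLp 2 (Function.update z i0 0) with hw0def
  have hw0coord : ∀ j, w0 j = Function.update z i0 0 j := fun _ => rfl
  have hw0last : w0 i0 = 0 := Function.update_self i0 0 z
  have hnw0 : ‖w0‖ ^ 2 = ‖z‖ ^ 2 - ‖z i0‖ ^ 2 := by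
    have := norm_update_sq z w0 i0 0 hw0coord
    simpa using this
  -- herm z w0
  have hhermw0 : herm z w0 = ((‖z‖ ^ 2 - ‖z i0‖ ^ 2 : ℝ) : ℂ) := by
    have hsplit := herm_split z w0 i0
    have e2 : WithLp.toLp 2 (Function.update w0 i0 0) = w0 := by
      ext j
      by_cases hj : j = i0
      · subst hj; simp [hw0last]
      · simp [Function.update_of_ne hj]
    rw [e2, ← hw0def, herm_self, hw0last] at hsplit
    rw [hsplit, hnw0]
    simp
  -- the value at w0
  have hval : chartDist z w0 =
      Real.arcsin (‖z i0‖ / Real.sqrt (‖z‖ ^ 2 + 1)) := by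
    unfold chartDist
    rw [hhermw0, hnw0]
    have : ((‖z‖ ^ 2 - ‖z i0‖ ^ 2 : ℝ) : ℂ) + 1
        = ((‖z‖ ^ 2 - ‖z i0‖ ^ 2 + 1 : ℝ) : ℂ) := by push_cast; ring
    rw [this, Complex.norm_real, Real.norm_eq_abs, abs_of_nonneg (by nlinarith)]
    have := arccos_form (‖z‖ ^ 2) (‖z i0‖ ^ 2) hA0 hAS
    rw [Real.sqrt_sq (norm_nonneg _)] at this
    exact this
  -- w0 ∈ frontier Om
  have hw0mem : w0 ∈ frontier Om := by
    rw [hOpen.frontier_eq]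
    constructor
    · rw [Metric.mem_closure_iff]
      intro ε hε
      set δ : ℝ := min (ε / 2) (1 / 2) with hδdef
      have hδ0 : 0 < δ := lt_min (by linarith) (by norm_num)
      have hδε : δ < ε := (min_le_left _ _).trans_lt (by linarith)
      have hδh : δ ≤ 1 / 2 := min_le_right _ _
      refine ⟨WithLp.toLp 2 (Function.update z i0 ((-δ : ℝ) : ℂ)), ?_, ?_⟩
      · rw [hOm]
        constructor
        · have hb := norm_update_sq z (WithLp.toLp 2 (Function.update z i0 ((-δ : ℝ) : ℂ))) i0
            ((-δ : ℝ) : ℂ) (fun _ => rfl)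
          have habs : ‖((-δ : ℝ) : ℂ)‖ = δ := by
            rw [Complex.norm_real, Real.norm_eq_abs, abs_of_neg (by linarith)]; ring
          rw [habs] at hb
          have hnn : (0:ℝ) ≤ ‖(WithLp.toLp 2 (Function.update z i0 ((-δ : ℝ) : ℂ)) :
              EuclideanSpace ℂ (Fin (n + 1)))‖ := norm_nonneg _
          nlinarith [hb, hA0, hδh, hδ0, hShalf]
        · left
          simp only [PiLp.toLp_apply, Function.update_self, Complex.ofReal_re]
          linarith
      · have hd := dist_update z i0 0 ((-δ : ℝ) : ℂ) w0
          (WithLp.toLp 2 (Function.update z i0 ((-δ : ℝ) : ℂ))) hw0coord (fun _ => rfl)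
        rw [hd, Complex.dist_eq]
        have : ‖0 - ((-δ : ℝ) : ℂ)‖ = δ := by
          simp [abs_of_pos hδ0]
        rw [this]
        exact hδε
    · rw [hOm]
      rintro ⟨-, h | h⟩ <;> rw [hw0last] at h <;> simp at h
  -- lower bound
  have hlow : ∀ w : EuclideanSpace ℂ (Fin (n + 1)), w ∈ frontier Om →
      Real.arcsin (‖z i0‖ / Real.sqrt (‖z‖ ^ 2 + 1)) ≤ chartDist z w := by
    intro w hw
    have hwle : ‖w‖ ≤ 1 := by
      have h1 : w ∈ closure Om := frontier_subset_closure hw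
      have h2 : closure Om ⊆ {x : EuclideanSpace ℂ (Fin (n + 1)) | ‖x‖ ≤ 1} := by
        apply closure_minimal
        · rw [hOm]; intro x hx; exact hx.1.le
        · exact isClosed_le continuous_norm continuous_const
      exact h2 h1
    have hwnot : w ∉ Om := by
      rw [hOpen.frontier_eq] at hw
      exact hw.2
    -- key inequality
    have hkey : ‖herm z w + 1‖ ^ 2
        ≤ (‖z‖ ^ 2 - ‖z i0‖ ^ 2 + 1) * (‖w‖ ^ 2 + 1) := by
      rcases eq_or_lt_of_le hwle with heq | hlt
      · -- sphere case
        have hP : ‖herm z w + 1‖ ≤ ‖z‖ * ‖w‖ + 1 := by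
          calc ‖herm z w + 1‖
              ≤ ‖herm z w‖ + ‖1‖ := norm_add_le _ _
            _ ≤ ‖z‖ * ‖w‖ + 1 := by
                rw [norm_one]
                exact add_le_add_left (herm_abs_le z w) 1
        have hP0 : (0:ℝ) ≤ ‖herm z w + 1‖ := norm_nonneg _
        rw [heq] at hP ⊢
        have hz1 : ‖z‖ + 1 < Real.sqrt 2 := by linarith
        nlinarith [norm_nonneg z]
      · -- flat case
        have hxy : 0 ≤ (w i0).re ∧ 0 ≤ (w i0).im := by
          rw [hOm] at hwnot
          simp only [Set.mem_setOf_eq, not_and_or, not_or, not_lt] at hwnot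
          rcases hwnot with h | h
          · exact absurd hlt (not_lt.mpr h)
          · exact h
        obtain ⟨hx, hy⟩ := hxy
        set z1 : EuclideanSpace ℂ (Fin (n + 1)) := WithLp.toLp 2 (Function.update z i0 0) with hz1def
        set w1 : EuclideanSpace ℂ (Fin (n + 1)) := WithLp.toLp 2 (Function.update w i0 0) with hw1def
        have hsplit : herm z w = herm z1 w1 + z i0 * (starRingEnd ℂ) (w i0) :=
          herm_split z w i0
        set d : ℂ := z i0 * (starRingEnd ℂ) (w i0) with hddef
        have hd_re : d.re ≤ 0 := by
          rw [hddef]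
          simp only [Complex.mul_re, Complex.conj_re, Complex.conj_im]
          nlinarith [mul_nonpos_of_nonpos_of_nonneg hre.le hx,
            mul_nonpos_of_nonpos_of_nonneg him.le hy]
        have hnd : d.re * d.re + d.im * d.im
            = ‖z i0‖ ^ 2 * ‖w i0‖ ^ 2 := by
          have h1 : Complex.normSq d = ‖d‖ ^ 2 := (Complex.sq_norm d).symm
          rw [Complex.normSq_apply] at h1
          rw [h1, hddef, norm_mul, Complex.norm_conj]
          ring
        have hB2 : ‖1 + d‖ ^ 2
            ≤ 1 + ‖z i0‖ ^ 2 * ‖w i0‖ ^ 2 := by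
          rw [Complex.sq_norm, Complex.normSq_apply]
          simp only [Complex.add_re, Complex.add_im, Complex.one_re, Complex.one_im]
          nlinarith [hd_re, hnd]
        have hP : ‖herm z w + 1‖ ≤ ‖1 + d‖ + ‖z1‖ * ‖w1‖ := by
          rw [hsplit]
          calc ‖herm z1 w1 + d + 1‖
              = ‖(1 + d) + herm z1 w1‖ := by ring_nf
            _ ≤ ‖1 + d‖ + ‖herm z1 w1‖ := norm_add_le _ _
            _ ≤ ‖1 + d‖ + ‖z1‖ * ‖w1‖ :=
                add_le_add_right (herm_abs_le z1 w1) _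
        have hz1n : ‖z1‖ ^ 2 = ‖z‖ ^ 2 - ‖z i0‖ ^ 2 := by
          have := norm_update_sq z z1 i0 0 (fun _ => rfl)
          simpa using this
        have hw1n : ‖w1‖ ^ 2 = ‖w‖ ^ 2 - ‖w i0‖ ^ 2 := by
          have := norm_update_sq w w1 i0 0 (fun _ => rfl)
          simpa using this
        have hz1le : ‖z1‖ ≤ 1 := by nlinarith [norm_nonneg z1]
        have hw1le : ‖w1‖ ≤ 1 := by nlinarith [norm_nonneg w1, norm_nonneg w, sq_nonneg (‖w i0‖)]
        have hA2 : ‖z i0‖ ^ 2 ≤ 1 / 2 := by linarith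
        have hk := key_ineq ‖z1‖ ‖w1‖ (‖w i0‖) (‖z i0‖ ^ 2)
          (‖1 + d‖) (norm_nonneg z1) (norm_nonneg w1) hA0 hB2 hA2 hz1le hw1le
        have hP0 : (0:ℝ) ≤ ‖herm z w + 1‖ := norm_nonneg _
        have hB0 : (0:ℝ) ≤ ‖1 + d‖ := norm_nonneg _
        have hsu0 : (0:ℝ) ≤ ‖z1‖ * ‖w1‖ := mul_nonneg (norm_nonneg _) (norm_nonneg _)
        nlinarith [hP, hk, hz1n, hw1n]
    -- conclude
    have hposS : (0:ℝ) < ‖z‖ ^ 2 + 1 := by linarith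
    have hposW : (0:ℝ) < ‖w‖ ^ 2 + 1 := by positivity
    have hposSA : (0:ℝ) < ‖z‖ ^ 2 - ‖z i0‖ ^ 2 + 1 := by linarith
    have hP' : ‖herm z w + 1‖
        ≤ Real.sqrt (‖z‖ ^ 2 - ‖z i0‖ ^ 2 + 1) * Real.sqrt (‖w‖ ^ 2 + 1) := by
      rw [← Real.sqrt_mul hposSA.le]
      exact (Real.le_sqrt (norm_nonneg _) (by positivity)).mpr hkey
    have hq : ‖herm z w + 1‖ /
        (Real.sqrt (‖z‖ ^ 2 + 1) * Real.sqrt (‖w‖ ^ 2 + 1))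
        ≤ Real.cos (Real.arcsin (‖z i0‖ / Real.sqrt (‖z‖ ^ 2 + 1))) := by
      rw [Real.cos_arcsin]
      have hx2 : (‖z i0‖ / Real.sqrt (‖z‖ ^ 2 + 1)) ^ 2
          = ‖z i0‖ ^ 2 / (‖z‖ ^ 2 + 1) := by
        rw [div_pow, Real.sq_sqrt hposS.le]
      rw [hx2]
      have he : (1:ℝ) - ‖z i0‖ ^ 2 / (‖z‖ ^ 2 + 1)
          = (‖z‖ ^ 2 - ‖z i0‖ ^ 2 + 1) / (‖z‖ ^ 2 + 1) := by
        field_simp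
        ring
      rw [he, Real.sqrt_div hposSA.le]
      rw [div_le_div_iff₀ (by positivity) (by positivity)]
      calc ‖herm z w + 1‖ * Real.sqrt (‖z‖ ^ 2 + 1)
          ≤ (Real.sqrt (‖z‖ ^ 2 - ‖z i0‖ ^ 2 + 1) * Real.sqrt (‖w‖ ^ 2 + 1))
            * Real.sqrt (‖z‖ ^ 2 + 1) :=
            mul_le_mul_of_nonneg_right hP' (Real.sqrt_nonneg _)
        _ = Real.sqrt (‖z‖ ^ 2 - ‖z i0‖ ^ 2 + 1)
            * (Real.sqrt (‖z‖ ^ 2 + 1) * Real.sqrt (‖w‖ ^ 2 + 1)) := by ring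
    have hθ0 : 0 ≤ Real.arcsin (‖z i0‖ / Real.sqrt (‖z‖ ^ 2 + 1)) :=
      Real.arcsin_nonneg.mpr (by positivity)
    have hθπ : Real.arcsin (‖z i0‖ / Real.sqrt (‖z‖ ^ 2 + 1)) ≤ Real.pi := by
      have := Real.arcsin_le_pi_div_two (‖z i0‖ / Real.sqrt (‖z‖ ^ 2 + 1))
      have hπ : 0 < Real.pi := Real.pi_pos
      linarith
    unfold chartDist
    rw [← Real.arccos_cos hθ0 hθπ]
    rw [Real.arccos_eq_pi_div_two_sub_arcsin, Real.arccos_eq_pi_div_two_sub_arcsin]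
    have := Real.monotone_arcsin hq
    linarith
  have hne : Nonempty ↑(frontier Om) := ⟨⟨w0, hw0mem⟩⟩
  refine ⟨?_, hw0mem, by rw [hval]⟩
  apply le_antisymm
  · have hbdd : BddBelow (Set.range fun w : frontier Om =>
        chartDist z (w : EuclideanSpace ℂ (Fin (n + 1)))) := by
      refine ⟨0, ?_⟩
      rintro x ⟨w, rfl⟩
      exact Real.arccos_nonneg _
    exact (ciInf_le hbdd (⟨w0, hw0mem⟩ : frontier Om)).trans hval.le
  · exact le_ciInf fun w => hlow w w.2
end
end

section
/- Fix η with 0 < η < 1 and define u : ℝ² → ℝ by u(x,y) = −(arctan(√(x² + y²)))^η. Then there exists ε > 0 such that for every (x,y) ∈ ℝ² with 0 < √(x² + y²) < ε, u is twice differentiable near (x,y) and (∂²u/∂x²)(x,y) + (∂²u/∂y²)(x,y) < 0. -/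
noncomputable section

open Real

namespace Stmt19Aux

lemma arctan_pos' {r : ℝ} (hr : 0 < r) : 0 < Real.arctan r := by
  have := Real.arctan_strictMono hr
  rwa [Real.arctan_zero] at this

/-- arctan r ≥ r / (1 + r²) for r ≥ 0. -/
lemma arctan_ge {r : ℝ} (hr : 0 ≤ r) : r / (1 + r ^ 2) ≤ Real.arctan r := by
  set f : ℝ → ℝ := fun t => Real.arctan t - t / (1 + t ^ 2) with hf
  have hden : ∀ t : ℝ, (1 + t ^ 2) ≠ 0 := fun t => by positivity
  have hder : ∀ t : ℝ, HasDerivAt f (2 * t ^ 2 / (1 + t ^ 2) ^ 2) t := by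
    intro t
    have h1 : HasDerivAt (fun t : ℝ => t / (1 + t ^ 2))
        ((1 * (1 + t ^ 2) - t * (2 * t)) / (1 + t ^ 2) ^ 2) t := by
      have ha : HasDerivAt (fun t : ℝ => t) 1 t := hasDerivAt_id t
      have hb : HasDerivAt (fun t : ℝ => 1 + t ^ 2) (2 * t) t := by
        have := (hasDerivAt_pow 2 t).const_add (1 : ℝ)
        simpa using this
      exact ha.div hb (hden t)
    have h2 := (Real.hasDerivAt_arctan t).sub h1
    refine h2.congr_deriv ?_
    field_simp
    ring
  have hmono : MonotoneOn f (Set.Ici (0 : ℝ)) := by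
    apply monotoneOn_of_deriv_nonneg (convex_Ici 0)
    · exact fun t _ => ((hder t).continuousAt).continuousWithinAt
    · intro t _
      exact ((hder t).differentiableAt).differentiableWithinAt
    · intro t _
      rw [(hder t).deriv]
      positivity
  have hf0 : f 0 = 0 := by simp [hf]
  have h0 : f 0 ≤ f r := hmono (Set.mem_Ici.mpr le_rfl) hr hr
  rw [hf0] at h0
  simp only [hf] at h0
  linarith

def G (η s : ℝ) : ℝ := -(η * Real.arctan (Real.sqrt s) ^ (η - 1) / ((1 + s) * Real.sqrt s))

def G' (η s : ℝ) : ℝ :=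
  -(η / (2 * s * (1 + s) ^ 2)) *
    ((η - 1) * Real.arctan (Real.sqrt s) ^ (η - 2) -
      Real.arctan (Real.sqrt s) ^ (η - 1) * (1 + 3 * s) / Real.sqrt s)

lemma hasDerivAt_inner (η y a : ℝ) (h : 0 < a ^ 2 + y ^ 2) :
    HasDerivAt (fun a' : ℝ => -(Real.arctan (Real.sqrt (a' ^ 2 + y ^ 2)) ^ η))
      (a * G η (a ^ 2 + y ^ 2)) a := by
  have hsq : 0 < Real.sqrt (a ^ 2 + y ^ 2) := Real.sqrt_pos.mpr h
  have hA : 0 < Real.arctan (Real.sqrt (a ^ 2 + y ^ 2)) := arctan_pos' hsq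
  have h1 : HasDerivAt (fun a' : ℝ => a' ^ 2 + y ^ 2) (2 * a) a := by
    simpa using (hasDerivAt_pow 2 a).add_const (y ^ 2)
  have h2 : HasDerivAt Real.sqrt (1 / (2 * Real.sqrt (a ^ 2 + y ^ 2))) (a ^ 2 + y ^ 2) :=
    Real.hasDerivAt_sqrt h.ne'
  have h3 : HasDerivAt Real.arctan (1 / (1 + Real.sqrt (a ^ 2 + y ^ 2) ^ 2))
      (Real.sqrt (a ^ 2 + y ^ 2)) := Real.hasDerivAt_arctan _
  have h4 : HasDerivAt (fun t : ℝ => t ^ η)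
      (η * Real.arctan (Real.sqrt (a ^ 2 + y ^ 2)) ^ (η - 1))
      (Real.arctan (Real.sqrt (a ^ 2 + y ^ 2))) :=
    Real.hasDerivAt_rpow_const (Or.inl hA.ne')
  have hcomp := (((h4.comp _ h3).comp _ h2).comp a h1).neg
  have heq : (fun a' : ℝ => -(Real.arctan (Real.sqrt (a' ^ 2 + y ^ 2)) ^ η)) =
      fun a' : ℝ => -(((fun t : ℝ => t ^ η) ∘ Real.arctan ∘ Real.sqrt ∘
        fun a' : ℝ => a' ^ 2 + y ^ 2) a') := rfl
  rw [heq]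
  refine hcomp.congr_deriv ?_
  have hsqs : Real.sqrt (a ^ 2 + y ^ 2) ^ 2 = a ^ 2 + y ^ 2 := Real.sq_sqrt h.le
  rw [G]
  field_simp [hsqs]
  rw [hsqs]

lemma hasDerivAt_G (η : ℝ) {s : ℝ} (hs : 0 < s) : HasDerivAt (G η) (G' η s) s := by
  obtain ⟨r, hr, rfl⟩ : ∃ r, 0 < r ∧ s = r ^ 2 :=
    ⟨Real.sqrt s, Real.sqrt_pos.mpr hs, (Real.sq_sqrt hs.le).symm⟩
  have hsr : Real.sqrt (r ^ 2) = r := Real.sqrt_sq hr.le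
  have hrs : (0:ℝ) < r ^ 2 := by positivity
  have hA : 0 < Real.arctan (Real.sqrt (r ^ 2)) := arctan_pos' (Real.sqrt_pos.mpr hrs)
  have h2 : HasDerivAt Real.sqrt (1 / (2 * Real.sqrt (r ^ 2))) (r ^ 2) :=
    Real.hasDerivAt_sqrt hrs.ne'
  have h3 : HasDerivAt Real.arctan (1 / (1 + Real.sqrt (r ^ 2) ^ 2)) (Real.sqrt (r ^ 2)) :=
    Real.hasDerivAt_arctan _
  have h4 : HasDerivAt (fun t : ℝ => t ^ (η - 1))
      ((η - 1) * Real.arctan (Real.sqrt (r ^ 2)) ^ (η - 1 - 1))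
      (Real.arctan (Real.sqrt (r ^ 2))) :=
    Real.hasDerivAt_rpow_const (Or.inl hA.ne')
  have hnum : HasDerivAt (fun t : ℝ => η * Real.arctan (Real.sqrt t) ^ (η - 1))
      (η * ((η - 1) * Real.arctan (Real.sqrt (r ^ 2)) ^ (η - 1 - 1) *
        (1 / (1 + Real.sqrt (r ^ 2) ^ 2)) * (1 / (2 * Real.sqrt (r ^ 2))))) (r ^ 2) := by
    have hc := (((h4.comp _ h3).comp (r ^ 2) h2)).const_mul η
    have heq : (fun t : ℝ => η * Real.arctan (Real.sqrt t) ^ (η - 1)) =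
        fun t : ℝ => η * (((fun t : ℝ => t ^ (η - 1)) ∘ Real.arctan ∘ Real.sqrt) t) := rfl
    rw [heq]
    exact hc
  have hden : HasDerivAt (fun t : ℝ => (1 + t) * Real.sqrt t)
      (1 * Real.sqrt (r ^ 2) + (1 + r ^ 2) * (1 / (2 * Real.sqrt (r ^ 2)))) (r ^ 2) := by
    have ha : HasDerivAt (fun t : ℝ => 1 + t) 1 (r ^ 2) := by
      simpa using (hasDerivAt_id (r ^ 2)).const_add (1 : ℝ)
    exact ha.mul h2
  have hden_ne : (1 + r ^ 2) * Real.sqrt (r ^ 2) ≠ 0 := by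
    rw [hsr]; positivity
  have hdiv := (hnum.div hden hden_ne).neg
  have heq : G η = fun t : ℝ =>
      -(η * Real.arctan (Real.sqrt t) ^ (η - 1) / ((1 + t) * Real.sqrt t)) := rfl
  rw [heq]
  refine hdiv.congr_deriv ?_
  rw [G', hsr]
  have hA' : 0 < Real.arctan r := arctan_pos' hr
  have hA2 : Real.arctan r ^ (η - 1 - 1) = Real.arctan r ^ (η - 2) := by
    congr 1; ring
  have hA1 : Real.arctan r ^ (η - 1) = Real.arctan r ^ (η - 2) * Real.arctan r := by
    rw [← Real.rpow_add_one hA'.ne' (η - 2)]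
    congr 1; ring
  rw [hA2, hA1]
  field_simp
  ring

/-- The second partial derivative (deriv of deriv) in the first slot. -/
lemma deriv_deriv (η x y : ℝ) (h : 0 < x ^ 2 + y ^ 2) :
    deriv (fun a : ℝ =>
        deriv (fun a' : ℝ => -(Real.arctan (Real.sqrt (a' ^ 2 + y ^ 2)) ^ η)) a) x =
      G η (x ^ 2 + y ^ 2) + 2 * x ^ 2 * G' η (x ^ 2 + y ^ 2) := by
  have hev : (fun a : ℝ =>
      deriv (fun a' : ℝ => -(Real.arctan (Real.sqrt (a' ^ 2 + y ^ 2)) ^ η)) a)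
      =ᶠ[nhds x] fun a : ℝ => a * G η (a ^ 2 + y ^ 2) := by
    have hcont : ContinuousAt (fun a : ℝ => a ^ 2 + y ^ 2) x := by fun_prop
    have hpos : ∀ᶠ a in nhds x, 0 < a ^ 2 + y ^ 2 :=
      hcont.eventually (eventually_gt_nhds h)
    filter_upwards [hpos] with a ha
    exact (hasDerivAt_inner η y a ha).deriv
  rw [hev.deriv_eq]
  have hid : HasDerivAt (fun a : ℝ => a) 1 x := hasDerivAt_id x
  have hin : HasDerivAt (fun a : ℝ => a ^ 2 + y ^ 2) (2 * x) x := by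
    simpa using (hasDerivAt_pow 2 x).add_const (y ^ 2)
  have hGc : HasDerivAt (fun a : ℝ => G η (a ^ 2 + y ^ 2))
      (G' η (x ^ 2 + y ^ 2) * (2 * x)) x := HasDerivAt.comp (h₂ := G η) x (hasDerivAt_G η h) hin
  have := hid.mul hGc
  rw [show (fun a : ℝ => a * G η (a ^ 2 + y ^ 2)) =
      (fun a : ℝ => a) * fun a : ℝ => G η (a ^ 2 + y ^ 2) from rfl, this.deriv]
  ring

/-- The Laplacian identity: 2G + 2sG' in factored form. -/
lemma laplacian_eq (η : ℝ) {s : ℝ} (hs : 0 < s) :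
    2 * G η s + 2 * s * G' η s =
      -(η * Real.arctan (Real.sqrt s) ^ (η - 2) / (1 + s) ^ 2) *
        ((η - 1) + Real.arctan (Real.sqrt s) * (1 - s) / Real.sqrt s) := by
  obtain ⟨r, hr, rfl⟩ : ∃ r, 0 < r ∧ s = r ^ 2 :=
    ⟨Real.sqrt s, Real.sqrt_pos.mpr hs, (Real.sq_sqrt hs.le).symm⟩
  have hsr : Real.sqrt (r ^ 2) = r := Real.sqrt_sq hr.le
  have hA : 0 < Real.arctan r := arctan_pos' hr
  rw [G, G', hsr]
  have hA1 : Real.arctan r ^ (η - 1) = Real.arctan r ^ (η - 2) * Real.arctan r := by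
    rw [← Real.rpow_add_one hA.ne' (η - 2)]
    congr 1; ring
  rw [hA1]
  field_simp
  ring

lemma contdiff (η x y : ℝ) (h : 0 < x ^ 2 + y ^ 2) :
    ContDiffAt ℝ 2
      (fun pt : ℝ × ℝ => -(Real.arctan (Real.sqrt (pt.1 ^ 2 + pt.2 ^ 2)) ^ η)) (x, y) := by
  have hsq : 0 < Real.sqrt (x ^ 2 + y ^ 2) := Real.sqrt_pos.mpr h
  have hA : 0 < Real.arctan (Real.sqrt (x ^ 2 + y ^ 2)) := arctan_pos' hsq
  have c1 : ContDiffAt ℝ 2 (fun pt : ℝ × ℝ => pt.1 ^ 2 + pt.2 ^ 2) (x, y) :=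
    (((contDiff_fst.pow 2).add (contDiff_snd.pow 2)).contDiffAt)
  have c2 : ContDiffAt ℝ 2 Real.sqrt (x ^ 2 + y ^ 2) := Real.contDiffAt_sqrt h.ne'
  have c3 : ContDiffAt ℝ 2 Real.arctan (Real.sqrt (x ^ 2 + y ^ 2)) :=
    Real.contDiff_arctan.contDiffAt
  have c4 : ContDiffAt ℝ 2 (fun t : ℝ => t ^ η) (Real.arctan (Real.sqrt (x ^ 2 + y ^ 2))) :=
    Real.contDiffAt_rpow_const_of_ne hA.ne'
  have := (((c4.comp _ c3).comp _ c2).comp (x, y) c1).neg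
  exact this

end Stmt19Aux

open Stmt19Aux in
theorem stmt19 (η : ℝ) (hη0 : 0 < η) (hη1 : η < 1) :
    ∃ ε > 0, ∀ x y : ℝ,
      0 < Real.sqrt (x ^ 2 + y ^ 2) → Real.sqrt (x ^ 2 + y ^ 2) < ε →
      ContDiffAt ℝ 2
        (fun pt : ℝ × ℝ => -(Real.arctan (Real.sqrt (pt.1 ^ 2 + pt.2 ^ 2)) ^ η)) (x, y) ∧
      deriv (fun a : ℝ =>
          deriv (fun a' : ℝ => -(Real.arctan (Real.sqrt (a' ^ 2 + y ^ 2)) ^ η)) a) x +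
        deriv (fun b : ℝ =>
          deriv (fun b' : ℝ => -(Real.arctan (Real.sqrt (x ^ 2 + b' ^ 2)) ^ η)) b) y < 0 := by
  refine ⟨min 1 (Real.sqrt (η / 2)), by positivity, fun x y hpos hlt => ?_⟩
  have hs : 0 < x ^ 2 + y ^ 2 := by
    by_contra hc
    push_neg at hc
    have : Real.sqrt (x ^ 2 + y ^ 2) = 0 := Real.sqrt_eq_zero_of_nonpos hc
    linarith
  set s := x ^ 2 + y ^ 2 with hsdef
  have hs_lt1 : s < 1 := by
    have h1 : Real.sqrt s < 1 := lt_of_lt_of_le hlt (min_le_left _ _)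
    nlinarith [Real.sq_sqrt hs.le, Real.sqrt_nonneg s]
  have hs_lt : s < η / 2 := by
    have h1 : Real.sqrt s < Real.sqrt (η / 2) := lt_of_lt_of_le hlt (min_le_right _ _)
    have h2 : Real.sqrt s ^ 2 < Real.sqrt (η / 2) ^ 2 := by
      have := Real.sqrt_nonneg s
      nlinarith
    rwa [Real.sq_sqrt hs.le, Real.sq_sqrt (by positivity : (0:ℝ) ≤ η / 2)] at h2
  constructor
  · exact contdiff η x y hs
  · rw [deriv_deriv η x y hs]
    have hyx : 0 < y ^ 2 + x ^ 2 := by linarith [hs]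
    have hswap :
        deriv (fun b : ℝ =>
          deriv (fun b' : ℝ => -(Real.arctan (Real.sqrt (x ^ 2 + b' ^ 2)) ^ η)) b) y =
        G η (y ^ 2 + x ^ 2) + 2 * y ^ 2 * G' η (y ^ 2 + x ^ 2) := by
      have := deriv_deriv η y x hyx
      simpa [add_comm] using this
    rw [hswap]
    have hcomm : y ^ 2 + x ^ 2 = s := by rw [hsdef]; ring
    rw [hcomm]
    have key : G η s + 2 * x ^ 2 * G' η s + (G η s + 2 * y ^ 2 * G' η s) =
        2 * G η s + 2 * s * G' η s := by rw [hsdef]; ring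
    rw [key, laplacian_eq η hs]
    have hsq : 0 < Real.sqrt s := Real.sqrt_pos.mpr hs
    have hA : 0 < Real.arctan (Real.sqrt s) := arctan_pos' hsq
    set A := Real.arctan (Real.sqrt s) with hAdef
    have hsqs : Real.sqrt s ^ 2 = s := Real.sq_sqrt hs.le
    have hAge : Real.sqrt s / (1 + s) ≤ A := by
      have := arctan_ge (Real.sqrt_nonneg s)
      rwa [hsqs] at this
    have hbr : 0 < (η - 1) + A * (1 - s) / Real.sqrt s := by
      have h1 : (1 - s) / (1 + s) ≤ A * (1 - s) / Real.sqrt s := by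
        rw [div_le_div_iff₀ (by linarith) hsq]
        have h2 := (div_le_iff₀ (by linarith : (0:ℝ) < 1 + s)).mp hAge
        nlinarith [Real.sqrt_nonneg s]
      have h3 : 0 < (η - 1) + (1 - s) / (1 + s) := by
        have hd : (0:ℝ) < 1 + s := by linarith
        rw [show (η - 1) + (1 - s) / (1 + s) = (η * (1 + s) - 2 * s) / (1 + s) by
          field_simp; ring]
        apply div_pos _ hd
        nlinarith
      linarith
    have hApow : 0 < A ^ (η - 2) := Real.rpow_pos_of_pos hA _
    have hfac : 0 < η * A ^ (η - 2) / (1 + s) ^ 2 := by positivity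
    nlinarith
end
end
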